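/- Let (tₙ)_{n≥0} be strictly increasing with t₀ = 0 and tₙ → 1, and let (aₙ)_{n≥0} be a nonincreasing sequence of positive reals with aₙ → 0 and Σₙ aₙ = ∞. Let x¹ : [0,1] → ℝ be the continuous zigzag function which on [t_{2n}, t_{2n+1}] increases linearly from 0 to aₙ and on [t_{2n+1}, t_{2n+2}] decreases linearly from aₙ to 0, with x¹(1) = 0. Then for every c > 0, TV^c(x¹,[0,1]) = 2·Σ_{n≥0} max(aₙ − c, 0). -/

import Mathlib

open scoped ENNReal
open Filter

/-- Truncated variation of `x` with parameter `c` on `[s,t]`. -/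
noncomputable def truncVar (x : ℝ → ℝ) (c s t : ℝ) : ℝ≥0∞ :=
  ⨆ (n : ℕ) (u : Fin (n + 1) → ℝ) (_ : Monotone u) (_ : u 0 = s)
    (_ : u (Fin.last n) = t),
    ∑ i : Fin n, ENNReal.ofReal (|x (u i.succ) - x (u i.castSucc)| - c)


lemma pmax_mono (c : ℝ) {A B : ℝ} (h : A ≤ B) : max (A - c) 0 ≤ max (B - c) 0 := by
  apply max_le_max _ le_rfl; linarith

lemma pmax_superadd (c : ℝ) (hc : 0 ≤ c) {A B : ℝ} (hB : 0 ≤ B) (hBA : B ≤ A) :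
    max (A - B - c) 0 + max (B - c) 0 ≤ max (A - c) 0 := by
  rcases le_total (A - B) c with h1 | h1 <;> rcases le_total B c with h2 | h2 <;>
    simp [max_def] <;> split_ifs <;> linarith

lemma pmax_abs (c : ℝ) {X Y : ℝ} (hX : 0 ≤ X) (hY : 0 ≤ Y) :
    max (|X - Y| - c) 0 ≤ max (X - c) 0 + max (Y - c) 0 := by
  rcases abs_cases (X - Y) with ⟨h, _⟩ | ⟨h, _⟩ <;> rw [h]
  · exact le_add_of_le_of_nonneg (pmax_mono c (by linarith)) (le_max_right _ _)
  · exact le_add_of_nonneg_of_le (le_max_right _ _) (pmax_mono c (by linarith))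

lemma key (a : ℕ → ℝ) (c : ℝ) (hc : 0 ≤ c) :
    ∀ (n : ℕ) (v : ℕ → ℝ) (σ : ℕ → ℕ),
    (∀ i, i ≤ n → 0 ≤ v i) →
    (∀ i, i ≤ n → v i ≤ a (σ i / 2)) →
    (∀ i j, i ≤ j → j ≤ n → σ i ≤ σ j) →
    (∀ i j, i ≤ j → j ≤ n → σ i = σ j → Even (σ i) → v i ≤ v j) →
    (∀ i j, i ≤ j → j ≤ n → σ i = σ j → ¬ Even (σ i) → v j ≤ v i) →
    ∑ i ∈ Finset.range n, max (|v (i+1) - v i| - c) 0 ≤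
      2 * ∑ j ∈ ((Finset.range (n+1)).image (fun i => σ i / 2)).erase (σ n / 2),
          max (a j - c) 0
      + (if Even (σ n) then max (v n - c) 0
         else 2 * max (a (σ n / 2) - c) 0 - max (v n - c) 0) := by
  intro n
  induction n with
  | zero =>
    intro v σ h0 hva hσ hme hmo
    have himg : ((Finset.range 1).image (fun i => σ i / 2)).erase (σ 0 / 2) = ∅ := by
      simp
    rw [himg]
    simp only [Finset.range_zero, Finset.sum_empty, mul_zero, zero_add]
    split_ifs
    · exact le_max_right _ _
    · have h1 : max (v 0 - c) 0 ≤ max (a (σ 0 / 2) - c) 0 := pmax_mono c (hva 0 le_rfl)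
      have h2 : (0:ℝ) ≤ max (a (σ 0 / 2) - c) 0 := le_max_right _ _
      linarith
  | succ n ih =>
    intro v σ h0 hva hσ hme hmo
    have IH := ih v σ (fun i hi => h0 i (hi.trans (Nat.le_succ n)))
      (fun i hi => hva i (hi.trans (Nat.le_succ n)))
      (fun i j hij hj => hσ i j hij (hj.trans (Nat.le_succ n)))
      (fun i j hij hj => hme i j hij (hj.trans (Nat.le_succ n)))
      (fun i j hij hj => hmo i j hij (hj.trans (Nat.le_succ n)))
    rw [Finset.sum_range_succ]
    have hσle : σ n ≤ σ (n+1) := hσ n (n+1) (Nat.le_succ n) le_rfl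
    have hgle : σ n / 2 ≤ σ (n+1) / 2 := (Nat.div_le_div_right hσle : σ n / 2 ≤ σ (n+1) / 2)
    have hv0n : 0 ≤ v n := h0 n (Nat.le_succ n)
    have hv0n1 : 0 ≤ v (n+1) := h0 (n+1) le_rfl
    have hvan : v n ≤ a (σ n / 2) := hva n (Nat.le_succ n)
    have hvan1 : v (n+1) ≤ a (σ (n+1) / 2) := hva (n+1) le_rfl
    have hmem : σ n / 2 ∈ (Finset.range (n+1)).image (fun i => σ i / 2) :=
      Finset.mem_image.mpr ⟨n, Finset.mem_range.mpr (Nat.lt_succ_self n), rfl⟩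
    have himg : (Finset.range (n+1+1)).image (fun i => σ i / 2)
        = insert (σ (n+1) / 2) ((Finset.range (n+1)).image (fun i => σ i / 2)) := by
      rw [Finset.range_add_one, Finset.image_insert]
    rcases eq_or_lt_of_le hgle with hg | hg
    · -- same tooth
      have hPeq : ((Finset.range (n+1+1)).image (fun i => σ i / 2)).erase (σ (n+1) / 2)
          = ((Finset.range (n+1)).image (fun i => σ i / 2)).erase (σ n / 2) := by
        rw [himg, ← hg, Finset.insert_eq_self.mpr hmem]
      rw [hPeq]
      have haeq : a (σ (n+1) / 2) = a (σ n / 2) := by rw [← hg]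
      rcases eq_or_lt_of_le hσle with hseq | hslt
      · -- same segment
        by_cases hev : Even (σ n)
        · have hmvv : v n ≤ v (n+1) := hme n (n+1) (Nat.le_succ n) le_rfl hseq hev
          have hev1 : Even (σ (n+1)) := hseq ▸ hev
          rw [if_pos hev, if_pos hev1] at *
          rw [abs_of_nonneg (by linarith : (0:ℝ) ≤ v (n+1) - v n)]
          have := pmax_superadd c hc hv0n hmvv
          linarith
        · have hmvv : v (n+1) ≤ v n := hmo n (n+1) (Nat.le_succ n) le_rfl hseq hev
          have hev1 : ¬ Even (σ (n+1)) := hseq ▸ hev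
          rw [if_neg hev, if_neg hev1] at *
          rw [abs_of_nonpos (by linarith : v (n+1) - v n ≤ (0:ℝ)), neg_sub]
          have := pmax_superadd c hc hv0n1 hmvv
          rw [haeq]
          linarith
      · -- up → down within one tooth
        have hpar : σ n % 2 = 0 ∧ σ (n+1) % 2 = 1 := by omega
        have hev : Even (σ n) := Nat.even_iff.mpr hpar.1
        have hev1 : ¬ Even (σ (n+1)) := by
          rw [Nat.even_iff]; omega
        rw [if_pos hev, if_neg hev1] at *
        rw [haeq]
        have hpn : max (v n - c) 0 ≤ max (a (σ n / 2) - c) 0 := pmax_mono c hvan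
        have hpn1 : max (v (n+1) - c) 0 ≤ max (a (σ n / 2) - c) 0 :=
          pmax_mono c (haeq ▸ hvan1)
        rcases le_total (v (n+1)) (v n) with hvv | hvv
        · rw [abs_of_nonpos (by linarith : v (n+1) - v n ≤ (0:ℝ)), neg_sub]
          have := pmax_superadd c hc hv0n1 hvv
          linarith
        · rw [abs_of_nonneg (by linarith : (0:ℝ) ≤ v (n+1) - v n)]
          have := pmax_superadd c hc hv0n hvv
          linarith
    · -- new tooth
      have hnotmem : σ (n+1) / 2 ∉ (Finset.range (n+1)).image (fun i => σ i / 2) := by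
        simp only [Finset.mem_image, Finset.mem_range, not_exists]
        intro i
        intro hcon
        rcases hcon with ⟨hi, heq⟩
        have : σ i ≤ σ n := hσ i n (by omega) (Nat.le_succ n)
        have : σ i / 2 ≤ σ n / 2 := (Nat.div_le_div_right this : σ i / 2 ≤ σ n / 2)
        omega
      have hP1 : ((Finset.range (n+1+1)).image (fun i => σ i / 2)).erase (σ (n+1) / 2)
          = (Finset.range (n+1)).image (fun i => σ i / 2) := by
        rw [himg, Finset.erase_insert hnotmem]
      have hsum : ∑ j ∈ (Finset.range (n+1)).image (fun i => σ i / 2), max (a j - c) 0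
          = (∑ j ∈ ((Finset.range (n+1)).image (fun i => σ i / 2)).erase (σ n / 2),
              max (a j - c) 0) + max (a (σ n / 2) - c) 0 :=
        (Finset.sum_erase_add _ _ hmem).symm
      rw [hP1, hsum]
      have hcr := pmax_abs c hv0n1 hv0n
      have hpn : max (v n - c) 0 ≤ max (a (σ n / 2) - c) 0 := pmax_mono c hvan
      have hpn1 : max (v (n+1) - c) 0 ≤ max (a (σ (n+1) / 2) - c) 0 := pmax_mono c hvan1
      have hz1 : (0:ℝ) ≤ max (v n - c) 0 := le_max_right _ _
      have hz2 : (0:ℝ) ≤ max (v (n+1) - c) 0 := le_max_right _ _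
      split_ifs at * <;> linarith


lemma xprops (t : ℕ → ℝ) (hts : StrictMono t)
    (a : ℕ → ℝ) (hapos : ∀ n, 0 < a n) (x : ℝ → ℝ)
    (hup : ∀ n : ℕ, ∀ s ∈ Set.Ico (t (2 * n)) (t (2 * n + 1)),
      x s = a n * (s - t (2 * n)) / (t (2 * n + 1) - t (2 * n)))
    (hdown : ∀ n : ℕ, ∀ s ∈ Set.Ico (t (2 * n + 1)) (t (2 * n + 2)),
      x s = a n * (t (2 * n + 2) - s) / (t (2 * n + 2) - t (2 * n + 1)))
    (m : ℕ) (s s' : ℝ) (hs : t m ≤ s) (hss : s ≤ s') (hs' : s' < t (m+1)) :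
    0 ≤ x s ∧ x s ≤ a (m / 2) ∧ (Even m → x s ≤ x s') ∧ (¬ Even m → x s' ≤ x s) := by
  rcases Nat.even_or_odd m with he | ho
  · obtain ⟨k, hk⟩ := he
    have hm : m = 2 * k := by omega
    subst hm
    have hd : 0 < t (2*k+1) - t (2*k) := sub_pos.mpr (hts (Nat.lt_succ_self _))
    have hxs : x s = a k * (s - t (2*k)) / (t (2*k+1) - t (2*k)) :=
      hup k s ⟨hs, lt_of_le_of_lt hss hs'⟩
    have hxs' : x s' = a k * (s' - t (2*k)) / (t (2*k+1) - t (2*k)) :=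
      hup k s' ⟨hs.trans hss, hs'⟩
    have hm2 : (2*k)/2 = k := by omega
    refine ⟨?_, ?_, ?_, ?_⟩
    · rw [hxs]; exact div_nonneg (mul_nonneg (hapos k).le (by linarith)) hd.le
    · rw [hxs, hm2, div_le_iff₀ hd]
      have h1 : s - t (2*k) ≤ t (2*k+1) - t (2*k) := by
        have := lt_of_le_of_lt hss hs'; linarith
      nlinarith [hapos k]
    · intro _
      rw [hxs, hxs']
      gcongr
      exact (hapos k).le
    · intro hcon; exact absurd (even_two_mul k) hcon
  · obtain ⟨k, hk⟩ := ho
    subst hk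
    have hd : 0 < t (2*k+2) - t (2*k+1) := sub_pos.mpr (hts (Nat.lt_succ_self _))
    have hxs : x s = a k * (t (2*k+2) - s) / (t (2*k+2) - t (2*k+1)) :=
      hdown k s ⟨hs, lt_of_le_of_lt hss hs'⟩
    have hxs' : x s' = a k * (t (2*k+2) - s') / (t (2*k+2) - t (2*k+1)) :=
      hdown k s' ⟨hs.trans hss, hs'⟩
    have hm2 : (2*k+1)/2 = k := by omega
    refine ⟨?_, ?_, ?_, ?_⟩
    · rw [hxs]
      have : s < t (2*k+2) := lt_of_le_of_lt hss hs'
      exact div_nonneg (mul_nonneg (hapos k).le (by linarith)) hd.le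
    · rw [hxs, hm2, div_le_iff₀ hd]
      have h1 : t (2*k+2) - s ≤ t (2*k+2) - t (2*k+1) := by linarith
      nlinarith [hapos k]
    · intro hcon
      exfalso
      rcases hcon with ⟨r, hr⟩; omega
    · intro _
      rw [hxs, hxs']
      gcongr
      exact (hapos k).le
lemma ofReal_max0 (r : ℝ) : ENNReal.ofReal (max r 0) = ENNReal.ofReal r := by
  rcases le_total r 0 with h | h
  · rw [max_eq_right h, ENNReal.ofReal_of_nonpos h, ENNReal.ofReal_zero]
  · rw [max_eq_left h]

lemma double_sum (g : ℕ → ℝ≥0∞) : ∀ N, ∑ k ∈ Finset.range (2*N), g (k/2) = 2 * ∑ j ∈ Finset.range N, g j := by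
  intro N
  induction N with
  | zero => simp
  | succ N ih =>
    have h2 : 2*(N+1) = (2*N+1)+1 := by ring
    rw [h2, Finset.sum_range_succ, Finset.sum_range_succ, ih, Finset.sum_range_succ]
    have e1 : (2*N+1)/2 = N := by omega
    have e2 : (2*N)/2 = N := by omega
    rw [e1, e2]; ring
lemma upper_bound (t : ℕ → ℝ) (hts : StrictMono t) (ht0 : t 0 = 0)
    (htlim : Tendsto t atTop (nhds 1))
    (a : ℕ → ℝ) (hapos : ∀ n, 0 < a n)
    (x : ℝ → ℝ)
    (hup : ∀ n : ℕ, ∀ s ∈ Set.Ico (t (2 * n)) (t (2 * n + 1)),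
      x s = a n * (s - t (2 * n)) / (t (2 * n + 1) - t (2 * n)))
    (hdown : ∀ n : ℕ, ∀ s ∈ Set.Ico (t (2 * n + 1)) (t (2 * n + 2)),
      x s = a n * (t (2 * n + 2) - s) / (t (2 * n + 2) - t (2 * n + 1)))
    (hx1 : x 1 = 0) (c : ℝ) (hc : 0 < c)
    (n : ℕ) (w : ℕ → ℝ) (hmono : Monotone w)
    (hge : ∀ k, 0 ≤ w k) (hle : ∀ k, w k ≤ 1) :
    ∑ k ∈ Finset.range n, ENNReal.ofReal (|x (w (k+1)) - x (w k)| - c) ≤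
      2 * ∑' j : ℕ, ENNReal.ofReal (max (a j - c) 0) := by
  classical
  have ht2 : ∀ s : ℝ, s < 1 → ∃ m, s < t (m+1) := by
    intro s hs
    by_contra hcon
    push_neg at hcon
    have h1 : (1:ℝ) ≤ s := by
      refine le_of_tendsto htlim (eventually_atTop.mpr ⟨1, fun k hk => ?_⟩)
      have := hcon (k - 1)
      have e : k - 1 + 1 = k := by omega
      rwa [e] at this
    linarith
  set Sg : ℕ → ℕ := fun k => if h : w k < 1 then Nat.find (ht2 (w k) h) else 0 with hSg_def
  have hweq1 : ∀ k, ¬ w k < 1 → w k = 1 := fun k h => le_antisymm (hle k) (not_lt.mp h)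
  have hfind : ∀ k, ∀ h : w k < 1, t (Sg k) ≤ w k ∧ w k < t (Sg k + 1) := by
    intro k h
    have hSgk : Sg k = Nat.find (ht2 (w k) h) := by simp only [hSg_def]; rw [dif_pos h]
    constructor
    · rcases Nat.eq_zero_or_pos (Sg k) with h0 | h0
      · rw [h0, ht0]; exact hge k
      · have hlt : Sg k - 1 < Nat.find (ht2 (w k) h) := by omega
        have := Nat.find_min (ht2 (w k) h) hlt
        push_neg at this
        have e : Sg k - 1 + 1 = Sg k := by omega
        rwa [e] at this
    · exact hSgk ▸ Nat.find_spec (ht2 (w k) h)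
  have hSgm : ∀ i j, i ≤ j → ∀ _ : w i < 1, ∀ hj : w j < 1, Sg i ≤ Sg j := by
    intro i j hij hi hj
    have h1 : Sg i = Nat.find (ht2 (w i) hi) := by simp only [hSg_def]; rw [dif_pos hi]
    rw [h1]
    exact Nat.find_min' _ (lt_of_le_of_lt (hmono hij) (hfind j hj).2)
  set B : ℕ := (Finset.range (n+1)).sup Sg + 1 with hB_def
  have hB : ∀ k, k ≤ n → Sg k < B :=
    fun k hk => Nat.lt_succ_of_le (Finset.le_sup (Finset.mem_range.mpr (by omega)))
  set σf : ℕ → ℕ := fun k => if w k < 1 then Sg k else 2*B+1 with hσf_def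
  have hσf_lt : ∀ k, ∀ h : w k < 1, σf k = Sg k := fun k h => if_pos h
  have hσf_one : ∀ k, ¬ w k < 1 → σf k = 2*B+1 := fun k h => if_neg h
  have h0 : ∀ i, i ≤ n → 0 ≤ x (w i) := by
    intro i _
    by_cases h : w i < 1
    · exact (xprops t hts a hapos x hup hdown (Sg i) (w i) (w i)
        (hfind i h).1 le_rfl (hfind i h).2).1
    · rw [hweq1 i h, hx1]
  have hva : ∀ i, i ≤ n → x (w i) ≤ a (σf i / 2) := by
    intro i _
    by_cases h : w i < 1
    · rw [hσf_lt i h]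
      exact (xprops t hts a hapos x hup hdown (Sg i) (w i) (w i)
        (hfind i h).1 le_rfl (hfind i h).2).2.1
    · have e : (2*B+1)/2 = B := by omega
      rw [hσf_one i h, hweq1 i h, hx1, e]
      exact (hapos B).le
  have hσm : ∀ i j, i ≤ j → j ≤ n → σf i ≤ σf j := by
    intro i j hij hj
    by_cases hwj : w j < 1
    · have hwi : w i < 1 := lt_of_le_of_lt (hmono hij) hwj
      rw [hσf_lt i hwi, hσf_lt j hwj]
      exact hSgm i j hij hwi hwj
    · by_cases hwi : w i < 1
      · rw [hσf_lt i hwi, hσf_one j hwj]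
        have := hB i (hij.trans hj)
        omega
      · rw [hσf_one i hwi, hσf_one j hwj]
  have hme : ∀ i j, i ≤ j → j ≤ n → σf i = σf j → Even (σf i) → x (w i) ≤ x (w j) := by
    intro i j hij hj hσeq hev
    by_cases hwj : w j < 1
    · have hwi : w i < 1 := lt_of_le_of_lt (hmono hij) hwj
      have hSeq : Sg i = Sg j := by
        have := hσeq; rwa [hσf_lt i hwi, hσf_lt j hwj] at this
      have h1 := (hfind i hwi).1
      rw [hSeq] at h1
      refine (xprops t hts a hapos x hup hdown (Sg j) (w i) (w j)
        h1 (hmono hij) (hfind j hwj).2).2.2.1 ?_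
      rwa [hσf_lt i hwi, hSeq] at hev
    · by_cases hwi : w i < 1
      · exfalso
        rw [hσf_lt i hwi, hσf_one j hwj] at hσeq
        have := hB i (hij.trans hj)
        omega
      · rw [hweq1 i hwi, hweq1 j hwj]
  have hmo : ∀ i j, i ≤ j → j ≤ n → σf i = σf j → ¬ Even (σf i) → x (w j) ≤ x (w i) := by
    intro i j hij hj hσeq hev
    by_cases hwj : w j < 1
    · have hwi : w i < 1 := lt_of_le_of_lt (hmono hij) hwj
      have hSeq : Sg i = Sg j := by
        have := hσeq; rwa [hσf_lt i hwi, hσf_lt j hwj] at this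
      have h1 := (hfind i hwi).1
      rw [hSeq] at h1
      refine (xprops t hts a hapos x hup hdown (Sg j) (w i) (w j)
        h1 (hmono hij) (hfind j hwj).2).2.2.2 ?_
      rwa [hσf_lt i hwi, hSeq] at hev
    · by_cases hwi : w i < 1
      · exfalso
        rw [hσf_lt i hwi, hσf_one j hwj] at hσeq
        have := hB i (hij.trans hj)
        omega
      · rw [hweq1 i hwi, hweq1 j hwj]
  have hk := key a c hc.le n (fun k => x (w k)) σf h0 hva hσm hme hmo
  -- pass to a clean real bound
  have hψ : (if Even (σf n) then max (x (w n) - c) 0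
      else 2 * max (a (σf n / 2) - c) 0 - max (x (w n) - c) 0)
      ≤ 2 * max (a (σf n / 2) - c) 0 := by
    split_ifs with h
    · have h1 : max (x (w n) - c) 0 ≤ max (a (σf n / 2) - c) 0 := pmax_mono c (hva n le_rfl)
      have h2 : (0:ℝ) ≤ max (a (σf n / 2) - c) 0 := le_max_right _ _
      linarith
    · have : (0:ℝ) ≤ max (x (w n) - c) 0 := le_max_right _ _
      linarith
  have hmemn : σf n / 2 ∈ (Finset.range (n+1)).image (fun i => σf i / 2) :=
    Finset.mem_image.mpr ⟨n, Finset.mem_range.mpr (Nat.lt_succ_self n), rfl⟩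
  have hIsum := Finset.sum_erase_add ((Finset.range (n+1)).image (fun i => σf i / 2))
    (fun j => max (a j - c) 0) hmemn
  have hsub : (Finset.range (n+1)).image (fun i => σf i / 2) ⊆ Finset.range (B+1) := by
    intro j hj
    rcases Finset.mem_image.mp hj with ⟨i, hi, rfl⟩
    have hi' : i ≤ n := by
      have := Finset.mem_range.mp hi; omega
    refine Finset.mem_range.mpr ?_
    by_cases h : w i < 1
    · rw [hσf_lt i h]
      have := hB i hi'
      omega
    · rw [hσf_one i h]
      omega
  have h3 : ∑ j ∈ (Finset.range (n+1)).image (fun i => σf i / 2), max (a j - c) 0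
      ≤ ∑ j ∈ Finset.range (B+1), max (a j - c) 0 :=
    Finset.sum_le_sum_of_subset_of_nonneg hsub (fun j _ _ => le_max_right _ _)
  have hreal : ∑ k ∈ Finset.range n, max (|x (w (k+1)) - x (w k)| - c) 0
      ≤ 2 * ∑ j ∈ Finset.range (B+1), max (a j - c) 0 := by
    linarith [hk, hψ, hIsum, h3]
  calc ∑ k ∈ Finset.range n, ENNReal.ofReal (|x (w (k+1)) - x (w k)| - c)
      = ∑ k ∈ Finset.range n, ENNReal.ofReal (max (|x (w (k+1)) - x (w k)| - c) 0) := by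
        exact Finset.sum_congr rfl fun k _ => (ofReal_max0 _).symm
    _ = ENNReal.ofReal (∑ k ∈ Finset.range n, max (|x (w (k+1)) - x (w k)| - c) 0) :=
        (ENNReal.ofReal_sum_of_nonneg (fun i _ => le_max_right _ _)).symm
    _ ≤ ENNReal.ofReal (2 * ∑ j ∈ Finset.range (B+1), max (a j - c) 0) :=
        ENNReal.ofReal_le_ofReal hreal
    _ = 2 * ENNReal.ofReal (∑ j ∈ Finset.range (B+1), max (a j - c) 0) := by
        rw [ENNReal.ofReal_mul (by norm_num : (0:ℝ) ≤ 2), ENNReal.ofReal_ofNat]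
    _ = 2 * ∑ j ∈ Finset.range (B+1), ENNReal.ofReal (max (a j - c) 0) := by
        rw [ENNReal.ofReal_sum_of_nonneg (fun j _ => le_max_right _ _)]
    _ ≤ 2 * ∑' j : ℕ, ENNReal.ofReal (max (a j - c) 0) :=
        mul_le_mul_right (ENNReal.sum_le_tsum _) 2

/-- For the continuous zigzag function `x¹` with peaks `aₙ` at times `t_{2n+1}`,
`TV^c(x¹,[0,1]) = 2·Σₙ max(aₙ − c, 0)` for every `c > 0`. -/
theorem truncVar_zigzag (t : ℕ → ℝ) (hts : StrictMono t) (ht0 : t 0 = 0)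
    (htlim : Tendsto t atTop (nhds 1))
    (a : ℕ → ℝ) (ha : Antitone a) (hapos : ∀ n, 0 < a n)
    (halim : Tendsto a atTop (nhds 0)) (hadiv : ¬ Summable a)
    (x : ℝ → ℝ)
    (hup : ∀ n : ℕ, ∀ s ∈ Set.Ico (t (2 * n)) (t (2 * n + 1)),
      x s = a n * (s - t (2 * n)) / (t (2 * n + 1) - t (2 * n)))
    (hdown : ∀ n : ℕ, ∀ s ∈ Set.Ico (t (2 * n + 1)) (t (2 * n + 2)),
      x s = a n * (t (2 * n + 2) - s) / (t (2 * n + 2) - t (2 * n + 1)))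
    (hx1 : x 1 = 0) (c : ℝ) (hc : 0 < c) :
    truncVar x c 0 1 = 2 * ∑' n : ℕ, ENNReal.ofReal (max (a n - c) 0) := by
  have ht1 : ∀ k, t k ≤ 1 := fun k => Monotone.ge_of_tendsto hts.monotone htlim k
  have xteven : ∀ k, x (t (2*k)) = 0 := by
    intro k
    rw [hup k (t (2*k)) ⟨le_rfl, hts (by omega)⟩]
    simp
  have xtodd : ∀ k, x (t (2*k+1)) = a k := by
    intro k
    rw [hdown k (t (2*k+1)) ⟨le_rfl, hts (by omega)⟩]
    have hd : t (2*k+2) - t (2*k+1) ≠ 0 := ne_of_gt (sub_pos.mpr (hts (by omega)))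
    field_simp
  apply le_antisymm
  · -- upper bound
    simp only [truncVar]
    apply iSup_le; intro n
    apply iSup_le; intro u
    apply iSup_le; intro hu
    apply iSup_le; intro hu0
    apply iSup_le; intro hu1
    set w : ℕ → ℝ := fun k => u ⟨min k n, Nat.lt_succ_of_le (min_le_right k n)⟩ with hw_def
    have hw : ∀ j : Fin (n+1), w (j : ℕ) = u j := by
      intro j
      simp only [hw_def]
      exact congrArg u (Fin.ext (min_eq_left (Nat.lt_succ_iff.mp j.isLt)))
    have hwmono : Monotone w := by
      intro i j hij
      exact hu (by simp only [Fin.mk_le_mk]; exact min_le_min hij le_rfl)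
    have hwge : ∀ k, 0 ≤ w k := by
      intro k
      have := hu (Fin.zero_le (⟨min k n, Nat.lt_succ_of_le (min_le_right k n)⟩ : Fin (n+1)))
      rwa [hu0] at this
    have hwle : ∀ k, w k ≤ 1 := by
      intro k
      have := hu (Fin.le_last (⟨min k n, Nat.lt_succ_of_le (min_le_right k n)⟩ : Fin (n+1)))
      rwa [hu1] at this
    have hconv : (∑ i : Fin n, ENNReal.ofReal (|x (u i.succ) - x (u i.castSucc)| - c))
        = ∑ k ∈ Finset.range n, ENNReal.ofReal (|x (w (k+1)) - x (w k)| - c) := by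
      rw [← Fin.sum_univ_eq_sum_range (fun k => ENNReal.ofReal (|x (w (k+1)) - x (w k)| - c)) n]
      refine Finset.sum_congr rfl fun i _ => ?_
      have e1 : w ((i : ℕ) + 1) = u i.succ := by rw [← hw i.succ, Fin.val_succ]
      have e2 : w (i : ℕ) = u i.castSucc := by rw [← hw i.castSucc, Fin.coe_castSucc]
      rw [e1, e2]
    rw [hconv]
    exact upper_bound t hts ht0 htlim a hapos x hup hdown hx1 c hc n w hwmono hwge hwle
  · -- lower bound
    rw [ENNReal.tsum_eq_iSup_nat, ENNReal.mul_iSup]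
    apply iSup_le; intro N
    simp only [truncVar]
    set wN : ℕ → ℝ := fun k => if k = 2*N+1 then (1:ℝ) else t k with hwN_def
    set uN : Fin (2*N+1+1) → ℝ := fun i => wN (i : ℕ) with huN_def
    have hmonoN : Monotone uN := by
      intro i j hij
      simp only [huN_def, hwN_def]
      have hi : (i:ℕ) ≤ 2*N+1 := Nat.lt_succ_iff.mp i.isLt
      have hj : (j:ℕ) ≤ 2*N+1 := Nat.lt_succ_iff.mp j.isLt
      have hij' : (i:ℕ) ≤ (j:ℕ) := hij
      split_ifs with h1 h2 h3
      · exact le_rfl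
      · exfalso; omega
      · exact ht1 _
      · exact hts.monotone hij'
    have h0N : uN 0 = 0 := by
      simp only [huN_def, hwN_def, Fin.val_zero]
      show (if (0:ℕ) = 2*N+1 then (1:ℝ) else t 0) = 0
      rw [if_neg (by omega), ht0]
    have hlastN : uN (Fin.last (2*N+1)) = 1 := by
      simp only [huN_def, hwN_def, Fin.val_last]
      simp
    refine le_iSup_of_le (2*N+1) (le_iSup_of_le uN (le_iSup_of_le hmonoN
      (le_iSup_of_le h0N (le_iSup_of_le hlastN ?_))))
    have hconv : (∑ i : Fin (2*N+1), ENNReal.ofReal (|x (uN i.succ) - x (uN i.castSucc)| - c))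
        = ∑ k ∈ Finset.range (2*N+1), ENNReal.ofReal (|x (wN (k+1)) - x (wN k)| - c) := by
      rw [← Fin.sum_univ_eq_sum_range
        (fun k => ENNReal.ofReal (|x (wN (k+1)) - x (wN k)| - c)) (2*N+1)]
      refine Finset.sum_congr rfl fun i _ => ?_
      have e1 : uN i.succ = wN ((i:ℕ)+1) := by simp only [huN_def, Fin.val_succ]
      have e2 : uN i.castSucc = wN (i:ℕ) := by simp only [huN_def, Fin.coe_castSucc]
      rw [e1, e2]
    rw [hconv, Finset.sum_range_succ]
    have hlast0 : ENNReal.ofReal (|x (wN (2*N+1)) - x (wN (2*N))| - c) = 0 := by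
      have e1 : wN (2*N+1) = 1 := by simp [hwN_def]
      have e2 : wN (2*N) = t (2*N) := by simp only [hwN_def]; rw [if_neg (by omega)]
      have e3 : |(0:ℝ) - 0| - c = -c := by simp
      rw [e1, e2, hx1, xteven N, e3]
      exact ENNReal.ofReal_of_nonpos (by linarith)
    rw [hlast0, add_zero]
    have hterms : ∑ k ∈ Finset.range (2*N), ENNReal.ofReal (|x (wN (k+1)) - x (wN k)| - c)
        = ∑ k ∈ Finset.range (2*N), ENNReal.ofReal (a (k/2) - c) := by
      refine Finset.sum_congr rfl fun k hk => ?_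
      have hk' : k < 2*N := Finset.mem_range.mp hk
      have e1 : wN (k+1) = t (k+1) := by simp only [hwN_def]; rw [if_neg (by omega)]
      have e2 : wN k = t k := by simp only [hwN_def]; rw [if_neg (by omega)]
      rw [e1, e2]
      rcases Nat.even_or_odd k with ⟨j, hj⟩ | ⟨j, hj⟩
      · have e3 : k = 2*j := by omega
        subst e3
        rw [xtodd j, xteven j, show (2*j)/2 = j by omega, sub_zero,
          abs_of_nonneg (hapos j).le]
      · have e3 : k = 2*j+1 := by omega
        subst e3
        rw [show 2*j+1+1 = 2*(j+1) from by ring, xteven (j+1), xtodd j,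
          show (2*j+1)/2 = j by omega, zero_sub, abs_neg, abs_of_nonneg (hapos j).le]
    rw [hterms, double_sum (fun j => ENNReal.ofReal (a j - c)) N]
    refine le_of_eq ?_
    congr 1
    exact Finset.sum_congr rfl fun k _ => ofReal_max0 _
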